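/- Let G be a P_5-free graph containing an induced antihole C = complement of C_{2t+1} (t ≥ 2). Let S_0 be the set of vertices with no neighbor on C, and for 1 ≤ m ≤ 2t let S_m be the set of vertices with exactly m neighbors on C. Then for every connected component A of G[S_0], each vertex of S_1 ∪ ... ∪ S_{2t} is either complete or anticomplete to A. -/

import Mathlib

open SimpleGraph

/-- `G` contains no induced subgraph isomorphic to `H`. -/
def HFree {W V : Type*} (H : SimpleGraph W) (G : SimpleGraph V) : Prop :=
  IsEmpty (H ↪g G)

/-- `G` is `k`-vertex-critical: `χ(G) = k` and deleting any vertex decreases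
the chromatic number below `k`. -/
def IsKVertexCritical {V : Type*} (G : SimpleGraph V) (k : ℕ) : Prop :=
  G.chromaticNumber = k ∧ ∀ v : V, (G.induce {v}ᶜ).chromaticNumber < k

/-- The star `K_{1,s}`: center `0`, leaves `1, …, s`. -/
def starGraph (s : ℕ) : SimpleGraph (Fin (s + 1)) :=
  SimpleGraph.fromRel (fun i _ => (i : ℕ) = 0)

/-- `K_{1,s} + P_1`: the disjoint union of the star `K_{1,s}`
(center `0`, leaves `1, …, s`) and the isolated vertex `s + 1`. -/
def starPlusP1 (s : ℕ) : SimpleGraph (Fin (s + 2)) :=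
  SimpleGraph.fromRel (fun i j => (i : ℕ) = 0 ∧ (j : ℕ) ≠ 0 ∧ (j : ℕ) ≤ s)

/-- The complement of `K_3 + 2P_1`: vertices `0,1,2` pairwise nonadjacent,
vertices `3,4` adjacent to everything else. -/
def coK3Plus2P1 : SimpleGraph (Fin 5) :=
  SimpleGraph.fromRel (fun i j => 3 ≤ (i : ℕ) ∨ 3 ≤ (j : ℕ))

/-- Along a walk from a vertex satisfying `P` to one not satisfying `P`,
there is an edge whose endpoints differ on `P`. -/
lemma walk_switch {V : Type*} {G : SimpleGraph V} (P : V → Prop) :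
    ∀ {u v : V} (_ : G.Walk u v), P u → ¬ P v →
      ∃ a b, G.Adj a b ∧ P a ∧ ¬ P b := by
  intro u v w
  induction w with
  | nil => intro h h'; exact absurd h h'
  | @cons u c v h w ih =>
    intro hu hv
    by_cases hc : P c
    · exact ih hc hv
    · exact ⟨u, c, h, hu, hc⟩

theorem stmt10 {V : Type*} (G : SimpleGraph V) (hP5 : HFree (pathGraph 5) G)
    (t : ℕ) (ht : 2 ≤ t) (f : ((cycleGraph (2 * t + 1))ᶜ) ↪g G)
    (S0 : Set V) (hS0 : S0 = {x | x ∉ Set.range f ∧ ∀ i, ¬ G.Adj x (f i)})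
    (A : Set V) (hAS : A ⊆ S0) (hne : A.Nonempty) (hconn : (G.induce A).Connected)
    (hcomp : ∀ a ∈ A, ∀ s ∈ S0 \ A, ¬ G.Adj a s) :
    ∀ x : V, x ∉ Set.range f →
      1 ≤ {i : Fin (2 * t + 1) | G.Adj x (f i)}.ncard →
      {i : Fin (2 * t + 1) | G.Adj x (f i)}.ncard ≤ 2 * t →
      (∀ a ∈ A, G.Adj x a) ∨ (∀ a ∈ A, ¬ G.Adj x a) := by
  intro x hxr h1 h2
  by_contra hcon
  push_neg at hcon
  obtain ⟨⟨b0, hb0A, hb0⟩, a0, ha0A, ha0⟩ := hcon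
  set N : Set (Fin (2 * t + 1)) := {i | G.Adj x (f i)} with hN
  -- find an edge a-b inside A with x adjacent to a but not to b
  obtain ⟨w⟩ := hconn.preconnected ⟨a0, ha0A⟩ ⟨b0, hb0A⟩
  obtain ⟨⟨a, haA⟩, ⟨b, hbA⟩, hab, hxa, hxb⟩ :=
    walk_switch (G := G.induce A) (fun v => G.Adj x v.val) w ha0 hb0
  simp only at hxa hxb
  have hab' : G.Adj a b := hab
  -- N is nonempty and not everything
  have hNne : N.Nonempty := by
    by_contra h
    rw [Set.not_nonempty_iff_eq_empty] at h
    rw [h, Set.ncard_empty] at h1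
    omega
  have hMne : Nᶜ.Nonempty := by
    by_contra h
    rw [Set.not_nonempty_iff_eq_empty, Set.compl_empty_iff] at h
    rw [h] at h2
    rw [Set.ncard_univ, Nat.card_eq_fintype_card, Fintype.card_fin] at h2
    omega
  have hone : (1 : Fin (2 * t + 1)).val = 1 := by
    rw [Fin.val_one', Nat.mod_eq_of_lt (by omega)]
  -- there are i ∈ N, j ∉ N adjacent in the antihole
  have key : ∃ i j, i ∈ N ∧ j ∈ Nᶜ ∧ ((cycleGraph (2 * t + 1))ᶜ).Adj i j := by
    by_contra hk
    push_neg at hk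
    have hcyc : ∀ i ∈ N, ∀ j ∈ Nᶜ, (cycleGraph (2 * t + 1)).Adj i j := by
      intro i hi j hj
      have hne : i ≠ j := fun h => hj (h ▸ hi)
      have := hk i j hi hj
      rw [compl_adj] at this
      push_neg at this
      exact this hne
    obtain ⟨i0, hi0⟩ := hNne
    obtain ⟨j0, hj0⟩ := hMne
    have hsub : (Set.univ : Set (Fin (2 * t + 1))) ⊆
        {j0 - 1, j0 + 1, i0 - 1, i0 + 1} := by
      intro k _
      simp only [Set.mem_insert_iff, Set.mem_singleton_iff]
      by_cases hkN : k ∈ N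
      · have hadj := hcyc k hkN j0 hj0
        rw [cycleGraph_adj'] at hadj
        rcases hadj with h | h
        · have h3 : k - j0 = 1 := Fin.ext (by rw [hone]; exact h)
          right; left
          rw [← h3]; abel
        · have h3 : j0 - k = 1 := Fin.ext (by rw [hone]; exact h)
          left
          rw [← h3]; abel
      · have hadj := hcyc i0 hi0 k (by exact hkN)
        rw [cycleGraph_adj'] at hadj
        rcases hadj with h | h
        · have h3 : i0 - k = 1 := Fin.ext (by rw [hone]; exact h)
          right; right; left
          rw [← h3]; abel
        · have h3 : k - i0 = 1 := Fin.ext (by rw [hone]; exact h)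
          right; right; right
          rw [← h3]; abel
    have hcard : (Set.univ : Set (Fin (2 * t + 1))).ncard ≤ 4 := by
      refine le_trans (Set.ncard_le_ncard hsub (Set.toFinite _)) ?_
      refine le_trans (Set.ncard_insert_le _ _) ?_
      have := Set.ncard_insert_le (j0 + 1) ({i0 - 1, i0 + 1} : Set (Fin (2 * t + 1)))
      have h2 := Set.ncard_insert_le (i0 - 1) ({i0 + 1} : Set (Fin (2 * t + 1)))
      simp [Set.ncard_singleton] at *
      omega
    rw [Set.ncard_univ, Nat.card_eq_fintype_card, Fintype.card_fin] at hcard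
    omega
  obtain ⟨i, j, hiN, hjN, hij⟩ := key
  -- gather facts
  have haS0 : a ∈ S0 := hAS haA
  have hbS0 : b ∈ S0 := hAS hbA
  rw [hS0] at haS0 hbS0
  obtain ⟨har, haC⟩ := haS0
  obtain ⟨hbr, hbC⟩ := hbS0
  have hxfi : G.Adj x (f i) := hiN
  have hxfj : ¬ G.Adj x (f j) := hjN
  have hfij : G.Adj (f i) (f j) := f.map_rel_iff.mpr hij
  have hbx : b ≠ x := by
    intro h; exact (h ▸ hbC) i hxfi
  have hxbadj : ¬ G.Adj b x := fun h => hxb h.symm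
  have hfinej : f i ≠ f j := fun h => hij.ne (f.injective h)
  -- build an induced P5 : b - a - x - f i - f j
  refine hP5.false ⟨⟨![b, a, x, f i, f j], ?_⟩, ?_⟩
  · intro u v huv
    fin_cases u <;> fin_cases v <;>
      (try simp at huv) <;>
      first
        | rfl
        | exact absurd huv hab'.ne
        | exact absurd huv hab'.ne'
        | exact absurd huv hbx
        | exact absurd huv hbx.symm
        | exact absurd huv.symm hxa.ne
        | exact absurd huv hxa.ne
        | exact absurd huv hfinej
        | exact absurd huv hfinej.symm
        | exact absurd (Set.mem_range.mpr ⟨i, huv.symm⟩) hbr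
        | exact absurd (Set.mem_range.mpr ⟨j, huv.symm⟩) hbr
        | exact absurd (Set.mem_range.mpr ⟨i, huv.symm⟩) har
        | exact absurd (Set.mem_range.mpr ⟨j, huv.symm⟩) har
        | exact absurd (Set.mem_range.mpr ⟨i, huv.symm⟩) hxr
        | exact absurd (Set.mem_range.mpr ⟨j, huv.symm⟩) hxr
        | exact absurd (Set.mem_range.mpr ⟨i, huv⟩) hbr
        | exact absurd (Set.mem_range.mpr ⟨j, huv⟩) hbr
        | exact absurd (Set.mem_range.mpr ⟨i, huv⟩) har
        | exact absurd (Set.mem_range.mpr ⟨j, huv⟩) har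
        | exact absurd (Set.mem_range.mpr ⟨i, huv⟩) hxr
        | exact absurd (Set.mem_range.mpr ⟨j, huv⟩) hxr
        | exact absurd huv hij.ne
        | exact absurd huv hij.ne'
  · intro u v
    fin_cases u <;> fin_cases v <;>
      simp only [pathGraph_adj] <;>
      simp <;>
      first
        | exact hab'.symm
        | exact hab'
        | exact hxa
        | exact hxa.symm
        | exact hxfi
        | exact hxfi.symm
        | exact hfij
        | exact hfij.symm
        | exact hxbadj
        | exact fun h => hxbadj h.symm
        | exact hxfj
        | exact fun h => hxfj h.symm
        | exact hbC i
        | exact fun h => (hbC i) h.symm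
        | exact hbC j
        | exact fun h => (hbC j) h.symm
        | exact haC i
        | exact fun h => (haC i) h.symm
        | exact haC j
        | exact fun h => (haC j) h.symm
        | exact ((cycleGraph (2 * t + 1)).compl_adj _ _).mp hij
        | exact ((cycleGraph (2 * t + 1)).compl_adj _ _).mp hij.symm
        | exact G.irrefl
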